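/- arXiv:1809.08762 — 3 statements merged into one kernel-verified Lean document; each statement's English description precedes it below -/
import Mathlib

section
/- Let G be a group, {H_λ}_{λ∈Λ} a family of subgroups, and for each λ let N_λ be a normal subgroup of H_λ. Let N = ⋃_λ N_λ and ⟪N⟫ its normal closure in G, and suppose the triple (G, {H_λ}, {N_λ}) has the Cohen-Lyndon property, with left transversals T_λ of H_λ⟪N⟫ in G witnessing it. Fix λ ∈ Λ. For each t ∈ T_λ, let Ā_t denote the image of the conjugate tN_λt⁻¹ under the quotient map ⟪N⟫ → ⟪N⟫/[⟪N⟫,⟪N⟫]. Then for every g ∈ G and every t₀ ∈ T_λ, letting t₁ be the unique element of T_λ with g t₀ ∈ t₁ H_λ⟪N⟫, the automorphism of the abelianization ⟪N⟫/[⟪N⟫,⟪N⟫] induced by conjugation by g maps Ā_{t₀} onto Ā_{t₁}. In particular, the conjugation action of G transitively permutes the family {Ā_t : t ∈ T_λ}. -/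
/-- A subset `T` of `G` is a left transversal of a subgroup `K` if every left coset
of `K` in `G` contains exactly one element of `T`. -/
def IsLeftTransversal {G : Type*} [Group G] (K : Subgroup G) (T : Set G) : Prop :=
  ∀ g : G, ∃! t : G, t ∈ T ∧ t⁻¹ * g ∈ K

/-- The normal closure in `G` of (the subgroup generated by) the union of a family of
subgroups `N i`. -/
abbrev familyNC {G : Type*} [Group G] {ι : Type*} (N : ι → Subgroup G) : Subgroup G :=
  Subgroup.normalClosure (⋃ i, (N i : Set G))

/-- The triple `(G, {H i}, {N i})` has the Cohen-Lyndon property, witnessed by the left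
transversals `T i` of `H i ⟪N⟫` in `G`: the canonical homomorphism from the free product
of the conjugates `t (N i) t⁻¹`, indexed by pairs `(i, t)` with `t ∈ T i`, to `G` is
injective with image the normal closure `⟪N⟫`. -/
def CohenLyndonFamilyWith {G : Type*} [Group G] {ι : Type*}
    (H : ι → Subgroup G) (N : ι → Subgroup G) (T : ι → Set G) : Prop :=
  (∀ i, IsLeftTransversal (H i ⊔ familyNC N) (T i)) ∧
  Function.Injective (Monoid.CoprodI.lift
    fun p : (Σ i, ↥(T i)) => ((N p.1).map (MulAut.conj (p.2 : G)).toMonoidHom).subtype) ∧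
  (Monoid.CoprodI.lift
    fun p : (Σ i, ↥(T i)) => ((N p.1).map (MulAut.conj (p.2 : G)).toMonoidHom).subtype).range
    = familyNC N

/-- The triple `(G, {H i}, {N i})` has the Cohen-Lyndon property. -/
def CohenLyndonFamily {G : Type*} [Group G] {ι : Type*}
    (H : ι → Subgroup G) (N : ι → Subgroup G) : Prop :=
  ∃ T : ι → Set G, CohenLyndonFamilyWith H N T

/-- `Ā t`: the image of the conjugate `t (N lam) t⁻¹` under the quotient map from
`⟪N⟫` to its abelianization `⟪N⟫/[⟪N⟫,⟪N⟫]`. -/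
def Abar {G : Type*} [Group G] {ι : Type*} (H : ι → Subgroup G)
    (N : ∀ i, Subgroup ↥(H i)) (lam : ι) (t : G) :
    Subgroup (Abelianization ↥(familyNC fun j => (N j).map (H j).subtype)) :=
  Subgroup.map Abelianization.of
    ((((N lam).map (H lam).subtype).map (MulAut.conj t).toMonoidHom).subgroupOf
      (familyNC fun j => (N j).map (H j).subtype))

section aux
open Pointwise
variable {G : Type*} [Group G]

lemma conj_map_map (a b : G) (S : Subgroup G) :
    Subgroup.map (MulAut.conj a).toMonoidHom (Subgroup.map (MulAut.conj b).toMonoidHom S)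
      = Subgroup.map (MulAut.conj (a * b)).toMonoidHom S := by
  rw [Subgroup.map_map]
  congr 1
  ext x
  simp [mul_assoc]

lemma map_conjNormal_subgroupOf (K : Subgroup G) [K.Normal] (A : Subgroup G) (g : G) :
    Subgroup.map (MulAut.conjNormal g : MulAut K).toMonoidHom (A.subgroupOf K)
      = (Subgroup.map (MulAut.conj g).toMonoidHom A).subgroupOf K := by
  ext ⟨x, hxK⟩
  simp only [Subgroup.mem_map, Subgroup.mem_subgroupOf]
  constructor
  · rintro ⟨⟨y, hyK⟩, hy, heq⟩
    refine ⟨y, hy, ?_⟩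
    have := congrArg (Subtype.val) heq
    simpa using this
  · rintro ⟨y, hy, hxy⟩
    have hxy' : (x : G) = g * y * g⁻¹ := by
      simpa using hxy.symm
    have hyK : y ∈ K := by
      have : g⁻¹ * (x : G) * g⁻¹⁻¹ ∈ K := Subgroup.Normal.conj_mem ‹K.Normal› _ hxK g⁻¹
      simpa [hxy', mul_assoc] using this
    refine ⟨⟨y, hyK⟩, hy, ?_⟩
    ext
    simp [hxy']

lemma abel_conj_le (K : Subgroup G) (B : Subgroup G) {m : G} (hm : m ∈ K) :
    Subgroup.map (Abelianization.of)
        ((Subgroup.map (MulAut.conj m).toMonoidHom B).subgroupOf K)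
      ≤ Subgroup.map Abelianization.of (B.subgroupOf K) := by
  rintro z ⟨⟨x, hxK⟩, hx, rfl⟩
  rw [SetLike.mem_coe, Subgroup.mem_subgroupOf] at hx
  obtain ⟨b, hb, hbx⟩ := hx
  have hbx' : x = m * b * m⁻¹ := by simpa using hbx.symm
  have hbK : b ∈ K := by
    have h1 : m⁻¹ * x * m ∈ K := mul_mem (mul_mem (inv_mem hm) hxK) hm
    have : m⁻¹ * x * m = b := by rw [hbx']; group
    rwa [this] at h1
  refine ⟨⟨b, hbK⟩, by simpa [Subgroup.mem_subgroupOf] using hb, ?_⟩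
  have hx_eq : (⟨x, hxK⟩ : K) = ⟨m, hm⟩ * ⟨b, hbK⟩ * (⟨m, hm⟩ : K)⁻¹ := by
    ext; simp [hbx']
  rw [hx_eq, map_mul, map_mul, map_inv, mul_comm (Abelianization.of _) (Abelianization.of _),
    mul_assoc, mul_inv_cancel, mul_one]

lemma abel_conj_eq (K : Subgroup G) (B : Subgroup G) {m : G} (hm : m ∈ K) :
    Subgroup.map (Abelianization.of)
        ((Subgroup.map (MulAut.conj m).toMonoidHom B).subgroupOf K)
      = Subgroup.map Abelianization.of (B.subgroupOf K) := by
  refine le_antisymm (abel_conj_le K B hm) ?_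
  have h2 := abel_conj_le K (Subgroup.map (MulAut.conj m).toMonoidHom B) (inv_mem hm)
  have h3 : Subgroup.map (MulAut.conj m⁻¹).toMonoidHom
      (Subgroup.map (MulAut.conj m).toMonoidHom B) = B := by
    rw [Subgroup.map_map]
    have : ((MulAut.conj m⁻¹).toMonoidHom.comp (MulAut.conj m).toMonoidHom)
        = MonoidHom.id G := by
      ext x; simp [mul_assoc]
    rw [this, Subgroup.map_id]
  rwa [h3] at h2

lemma conj_H_map {ι : Type*} (H : ι → Subgroup G) (N : ∀ i, Subgroup ↥(H i))
    [∀ i, (N i).Normal] (lam : ι) {h : G} (hh : h ∈ H lam) :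
    Subgroup.map (MulAut.conj h).toMonoidHom ((N lam).map (H lam).subtype)
      = (N lam).map (H lam).subtype := by
  have le : ∀ h' : G, h' ∈ H lam →
      Subgroup.map (MulAut.conj h').toMonoidHom ((N lam).map (H lam).subtype)
        ≤ (N lam).map (H lam).subtype := by
    rintro h' hh' x ⟨y, ⟨n, hn, rfl⟩, rfl⟩
    refine ⟨⟨h', hh'⟩ * n * (⟨h', hh'⟩ : H lam)⁻¹,
      Subgroup.Normal.conj_mem (inferInstance : (N lam).Normal) n hn ⟨h', hh'⟩, ?_⟩
    simp
  refine le_antisymm (le h hh) ?_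
  have h2 := Subgroup.map_mono (f := (MulAut.conj h).toMonoidHom) (le h⁻¹ (inv_mem hh))
  rwa [conj_map_map, mul_inv_cancel, show (MulAut.conj (1 : G)).toMonoidHom
      = MonoidHom.id G by ext x; simp, Subgroup.map_id] at h2

lemma key_conj_Abar {ι : Type*} (H : ι → Subgroup G) (N : ∀ i, Subgroup ↥(H i))
    [∀ i, (N i).Normal] (lam : ι) (g t₀ t₁ : G)
    (hcoset : t₁⁻¹ * (g * t₀) ∈ H lam ⊔ familyNC (fun j => (N j).map (H j).subtype)) :
    Subgroup.map (Abelianization.map (MulAut.conjNormal g).toMonoidHom)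
        (Abar H N lam t₀) = Abar H N lam t₁ := by
  have hmem : t₁⁻¹ * (g * t₀) ∈
      ((H lam : Set G) * (familyNC (fun j => (N j).map (H j).subtype) : Set G)) := by
    rw [← Subgroup.mul_normal (H lam)]
    exact hcoset
  obtain ⟨h, hh, n, hn, heq⟩ := hmem
  have hh' : h ∈ H lam := hh
  have hn' : n ∈ familyNC (fun j => (N j).map (H j).subtype) := hn
  have heq' : h * n = t₁⁻¹ * (g * t₀) := heq
  have hmK : t₁ * (h * n * h⁻¹) * t₁⁻¹ ∈ familyNC (fun j => (N j).map (H j).subtype) :=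
    Subgroup.Normal.conj_mem inferInstance _
      (Subgroup.Normal.conj_mem inferInstance n hn' h) t₁
  have hgt : g * t₀ = ((t₁ * (h * n * h⁻¹) * t₁⁻¹) * t₁) * h := by
    rw [show g * t₀ = t₁ * (h * n) from by rw [heq']; group]; group
  unfold Abar
  rw [Subgroup.map_map]
  have hcomp : (Abelianization.map
      (MulAut.conjNormal g : MulAut (familyNC (fun j => (N j).map (H j).subtype))).toMonoidHom).comp
      Abelianization.of = Abelianization.of.comp
      (MulAut.conjNormal g : MulAut (familyNC (fun j => (N j).map (H j).subtype))).toMonoidHom := by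
    ext x; simp [Abelianization.map_of]
  rw [hcomp, ← Subgroup.map_map, map_conjNormal_subgroupOf _ _ g]
  have hAB : Subgroup.map (MulAut.conj g).toMonoidHom
      (Subgroup.map (MulAut.conj t₀).toMonoidHom ((N lam).map (H lam).subtype))
      = Subgroup.map (MulAut.conj (t₁ * (h * n * h⁻¹) * t₁⁻¹)).toMonoidHom
        (Subgroup.map (MulAut.conj t₁).toMonoidHom ((N lam).map (H lam).subtype)) := by
    rw [conj_map_map, conj_map_map, hgt, ← conj_map_map, conj_H_map H N lam hh']
  rw [hAB]
  exact abel_conj_eq _ _ hmK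

end aux

/-- **Conjugation permutes the summands of the abelianized Dehn filling kernel.**
Let `(G, {H i}, {N i})` (with `N i` a normal subgroup of `H i`) have the Cohen-Lyndon
property, witnessed by left transversals `T i` of `H i ⟪N⟫` in `G`. Fix `lam`, let
`g ∈ G`, let `t₀ ∈ T lam` and let `t₁` be the element of `T lam` with
`g t₀ ∈ t₁ · H lam ⟪N⟫`. Then the automorphism of the abelianization `⟪N⟫/[⟪N⟫,⟪N⟫]`
induced by conjugation by `g` maps `Ā t₀` onto `Ā t₁`; in particular the conjugation
action of `G` transitively permutes the family `{Ā t : t ∈ T lam}`. -/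
theorem conj_maps_Abar_onto_Abar {G : Type*} [Group G] {ι : Type*}
    (H : ι → Subgroup G) (N : ∀ i, Subgroup ↥(H i)) [∀ i, (N i).Normal]
    (T : ι → Set G)
    (hCL : CohenLyndonFamilyWith H (fun j => (N j).map (H j).subtype) T)
    (lam : ι) (g : G) (t₀ t₁ : G) (ht₀ : t₀ ∈ T lam) (ht₁ : t₁ ∈ T lam)
    (hcoset : t₁⁻¹ * (g * t₀) ∈ H lam ⊔ familyNC (fun j => (N j).map (H j).subtype)) :
    Subgroup.map (Abelianization.map (MulAut.conjNormal g).toMonoidHom)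
        (Abar H N lam t₀) = Abar H N lam t₁ ∧
      ∀ s ∈ T lam, ∀ s' ∈ T lam, ∃ g' : G,
        Subgroup.map (Abelianization.map (MulAut.conjNormal g').toMonoidHom)
          (Abar H N lam s) = Abar H N lam s' := by
  refine ⟨key_conj_Abar H N lam g t₀ t₁ hcoset, ?_⟩
  intro s _ s' _
  refine ⟨s' * s⁻¹, key_conj_Abar H N lam (s' * s⁻¹) s s' ?_⟩
  rw [show s'⁻¹ * (s' * s⁻¹ * s) = 1 from by group]
  exact one_mem _
end

section
/- Let {G_i}_{i∈I} be a family of groups and let G = ∗_{i∈I} G_i be their free product (coproduct), with each G_i regarded as a subgroup of G via the canonical embedding. Let N_i be a normal subgroup of G_i for each i ∈ I. Then the triple (G, {G_i}_{i∈I}, {N_i}_{i∈I}) has the Cohen-Lyndon property. -/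
open Monoid Monoid.CoprodI Monoid.CoprodI.Word

namespace CLAux

open scoped Classical

variable {ι : Type*} {Gi : ι → Type*} [∀ i, Group (Gi i)] (N : ∀ i, Subgroup (Gi i))
  [∀ i, (N i).Normal]

/-- A section of the quotient map sending `1` to `1`. -/
noncomputable def sig (i : ι) (y : Gi i ⧸ N i) : Gi i :=
  if y = 1 then 1 else Quotient.out y

@[simp] lemma sig_spec (i : ι) (y : Gi i ⧸ N i) :
    (QuotientGroup.mk (sig N i y) : Gi i ⧸ N i) = y := by
  unfold sig
  split_ifs with h
  · simp [h]
  · exact QuotientGroup.out_eq' y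

@[simp] lemma sig_one (i : ι) : sig N i (1 : Gi i ⧸ N i) = 1 := if_pos rfl

/-- The quotient homomorphism between the free products. -/
noncomputable def phi : CoprodI Gi →* CoprodI (fun i => Gi i ⧸ N i) :=
  lift (fun i => (of (M := fun i => Gi i ⧸ N i)).comp (QuotientGroup.mk' (N i)))

@[simp] lemma phi_of (i : ι) (x : Gi i) :
    phi N (of x) = of (M := fun i => Gi i ⧸ N i) (QuotientGroup.mk x) := by
  simp [phi]

/-- `of` for the quotient free product, with the family made explicit. -/
noncomputable abbrev ofq (k : ι) : (Gi k ⧸ N k) →* CoprodI (fun i => Gi i ⧸ N i) :=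
  of (M := fun i => Gi i ⧸ N i)

/-- The set-theoretic lift of an element of the quotient free product, obtained by
lifting each letter of its normal form via `sig`. -/
noncomputable def ell (q : CoprodI (fun i => Gi i ⧸ N i)) : CoprodI Gi :=
  ((Word.equiv q).toList.map (fun l => of (sig N l.1 l.2))).prod

lemma equiv_one : Word.equiv (1 : CoprodI (fun i => Gi i ⧸ N i)) = Word.empty :=
  one_smul (CoprodI (fun i => Gi i ⧸ N i)) (Word.empty : Word (fun i => Gi i ⧸ N i))

lemma equiv_mul (a b : CoprodI (fun i => Gi i ⧸ N i)) :
    Word.equiv (a * b) = a • Word.equiv b :=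
  mul_smul a b (Word.empty : Word (fun i => Gi i ⧸ N i))

lemma prod_equiv (q : CoprodI (fun i => Gi i ⧸ N i)) : Word.prod (Word.equiv q) = q :=
  Word.equiv.symm_apply_apply q

lemma equiv_prod (w : Word (fun i => Gi i ⧸ N i)) : Word.equiv (Word.prod w) = w :=
  Word.equiv.apply_symm_apply w

@[simp] lemma ell_one : ell N 1 = 1 := by
  unfold ell
  rw [equiv_one]
  rfl

@[simp] lemma phi_ell (q : CoprodI (fun i => Gi i ⧸ N i)) : phi N (ell N q) = q := by
  conv_rhs => rw [← prod_equiv N q]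
  unfold ell Word.prod
  induction (Word.equiv q).toList with
  | nil => simp
  | cons a l ih => simp [ih]


/-- Head of `q` at index `k` : the (possibly trivial) first letter of `q` from factor `k`. -/
noncomputable def hdq (k : ι) (q : CoprodI (fun i => Gi i ⧸ N i)) : Gi k ⧸ N k :=
  (Word.equivPair k (Word.equiv q)).head

/-- Tail of `q` at index `k`. -/
noncomputable def tlq (k : ι) (q : CoprodI (fun i => Gi i ⧸ N i)) :
    CoprodI (fun i => Gi i ⧸ N i) :=
  Word.prod (Word.equivPair k (Word.equiv q)).tail

lemma decomp (k : ι) (q : CoprodI (fun i => Gi i ⧸ N i)) :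
    q = ofq N k (hdq N k q) * tlq N k q := by
  conv_lhs => rw [← prod_equiv N q, ← (Word.equivPair k).symm_apply_apply (Word.equiv q)]
  rw [Word.equivPair_symm, Word.prod_rcons]
  rfl

lemma tlq_fstIdx (k : ι) (q : CoprodI (fun i => Gi i ⧸ N i)) :
    Word.fstIdx (Word.equiv (tlq N k q)) ≠ some k := by
  unfold tlq
  rw [equiv_prod]
  exact (Word.equivPair k (Word.equiv q)).fstIdx_ne

lemma hdq_mul (k : ι) (y : Gi k ⧸ N k) (q : CoprodI (fun i => Gi i ⧸ N i)) :
    hdq N k (ofq N k y * q) = y * hdq N k q := by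
  unfold hdq
  rw [equiv_mul, Word.equivPair_smul_same]

lemma tlq_mul (k : ι) (y : Gi k ⧸ N k) (q : CoprodI (fun i => Gi i ⧸ N i)) :
    tlq N k (ofq N k y * q) = tlq N k q := by
  unfold tlq
  rw [equiv_mul, Word.equivPair_smul_same]

lemma hdq_of_ne (k : ι) {q : CoprodI (fun i => Gi i ⧸ N i)}
    (h : Word.fstIdx (Word.equiv q) ≠ some k) : hdq N k q = 1 := by
  unfold hdq
  rw [Word.equivPair_eq_of_fstIdx_ne h]

lemma tlq_of_ne (k : ι) {q : CoprodI (fun i => Gi i ⧸ N i)}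
    (h : Word.fstIdx (Word.equiv q) ≠ some k) : tlq N k q = q := by
  unfold tlq
  rw [Word.equivPair_eq_of_fstIdx_ne h]
  exact prod_equiv N q

/-- Key lemma: `ell` splits off a single letter. -/
lemma ell_cons (k : ι) (y : Gi k ⧸ N k) {q : CoprodI (fun i => Gi i ⧸ N i)}
    (h : Word.fstIdx (Word.equiv q) ≠ some k) :
    ell N (ofq N k y * q) = of (sig N k y) * ell N q := by
  by_cases hy : y = 1
  · simp [hy]
  · unfold ell
    rw [equiv_mul, Word.of_smul_def,
      Word.equivPair_eq_of_fstIdx_ne h]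
    simp only [Word.rcons, mul_one]
    rw [dif_neg hy]
    simp [Word.cons]

lemma ell_decomp (k : ι) (q : CoprodI (fun i => Gi i ⧸ N i)) :
    ell N q = of (sig N k (hdq N k q)) * ell N (tlq N k q) := by
  conv_lhs => rw [decomp N k q]
  exact ell_cons N k _ (tlq_fstIdx N k q)

/-- The Schreier correction letter. -/
noncomputable def nlet (k : ι) (x : Gi k) (q : CoprodI (fun i => Gi i ⧸ N i)) : Gi k :=
  (sig N k (QuotientGroup.mk x * hdq N k q))⁻¹ * x * sig N k (hdq N k q)

lemma nlet_mem (k : ι) (x : Gi k) (q : CoprodI (fun i => Gi i ⧸ N i)) :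
    nlet N k x q ∈ N k := by
  rw [← QuotientGroup.eq_one_iff]
  unfold nlet
  simp

lemma nlet_mul (k : ι) (x x' : Gi k) (q : CoprodI (fun i => Gi i ⧸ N i)) :
    nlet N k x (ofq N k (QuotientGroup.mk x') * q) * nlet N k x' q
      = nlet N k (x * x') q := by
  unfold nlet
  rw [hdq_mul]
  simp [QuotientGroup.mk_mul, mul_assoc]

lemma nlet_sig (k : ι) (y : Gi k ⧸ N k) {q : CoprodI (fun i => Gi i ⧸ N i)}
    (h : Word.fstIdx (Word.equiv q) ≠ some k) : nlet N k (sig N k y) q = 1 := by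
  unfold nlet
  rw [hdq_of_ne N k h]
  simp

lemma nlet_of_mem (k : ι) {x : Gi k} (hx : x ∈ N k) {q : CoprodI (fun i => Gi i ⧸ N i)}
    (h : Word.fstIdx (Word.equiv q) ≠ some k) : nlet N k x q = x := by
  unfold nlet
  rw [hdq_of_ne N k h]
  simp [(QuotientGroup.eq_one_iff x).2 hx]

/-- The Schreier identity. -/
lemma schreier (k : ι) (x : Gi k) (q : CoprodI (fun i => Gi i ⧸ N i)) :
    of x * ell N q =
      ell N (ofq N k (QuotientGroup.mk x) * q) *
        ((ell N (tlq N k q))⁻¹ * of (nlet N k x q) * ell N (tlq N k q)) := by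
  have h1 : ell N (ofq N k (QuotientGroup.mk x) * q)
      = of (sig N k (QuotientGroup.mk x * hdq N k q)) * ell N (tlq N k q) := by
    conv_lhs => rw [decomp N k (ofq N k (QuotientGroup.mk x) * q)]
    rw [hdq_mul, tlq_mul]
    exact ell_cons N k _ (tlq_fstIdx N k q)
  rw [h1, ell_decomp N k q]
  unfold nlet
  simp [mul_assoc]


/-- The transversal set at index `i`: inverses of lifts of words not beginning with `i`. -/
def TT (i : ι) : Set (CoprodI Gi) :=
  {t | ∃ q, Word.fstIdx (Word.equiv q) ≠ some i ∧ (ell N q)⁻¹ = t}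

lemma mem_TT {i : ι} {q : CoprodI (fun i => Gi i ⧸ N i)}
    (h : Word.fstIdx (Word.equiv q) ≠ some i) : (ell N q)⁻¹ ∈ TT N i :=
  ⟨q, h, rfl⟩

/-- The family of subgroups of the big free product. -/
def NN (i : ι) : Subgroup (CoprodI Gi) := (N i).map of

/-- The conjugated subgroups indexed by pairs. -/
def CC (p : Σ i, ↥(TT N i)) : Subgroup (CoprodI Gi) :=
  (NN N p.1).map (MulAut.conj (p.2 : CoprodI Gi)).toMonoidHom

/-- The abstract free product of the conjugated subgroups. -/
abbrev FP := CoprodI (fun p : Σ i, ↥(TT N i) => ↥(CC N p))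

/-- The canonical map from the abstract free product to the big free product. -/
noncomputable def theta : FP N →* CoprodI Gi := lift (fun p => (CC N p).subtype)

lemma pGen_mem {k : ι} {r : CoprodI (fun i => Gi i ⧸ N i)}
    (hr : Word.fstIdx (Word.equiv r) ≠ some k) {n : Gi k} (hn : n ∈ N k) :
    (ell N r)⁻¹ * of n * ell N r ∈
      CC N ⟨k, ⟨(ell N r)⁻¹, mem_TT N hr⟩⟩ := by
  refine Subgroup.mem_map.2 ⟨of n, Subgroup.mem_map_of_mem _ hn, ?_⟩
  simp [MulAut.conj_apply]

/-- A generator of the abstract free product. -/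
noncomputable def pGen (k : ι) (r : CoprodI (fun i => Gi i ⧸ N i))
    (hr : Word.fstIdx (Word.equiv r) ≠ some k) (n : Gi k) (hn : n ∈ N k) : FP N :=
  of (M := fun p : Σ i, ↥(TT N i) => ↥(CC N p))
    (i := ⟨k, ⟨(ell N r)⁻¹, mem_TT N hr⟩⟩)
    ⟨(ell N r)⁻¹ * of n * ell N r, pGen_mem N hr hn⟩

lemma pGen_congr (k : ι) {r r' : CoprodI (fun i => Gi i ⧸ N i)}
    {hr : Word.fstIdx (Word.equiv r) ≠ some k} {hr' : Word.fstIdx (Word.equiv r') ≠ some k}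
    {n n' : Gi k} {hn : n ∈ N k} {hn' : n' ∈ N k} (h1 : r = r') (h2 : n = n') :
    pGen N k r hr n hn = pGen N k r' hr' n' hn' := by
  subst h1; subst h2; rfl

@[simp] lemma theta_pGen (k : ι) (r : CoprodI (fun i => Gi i ⧸ N i))
    (hr : Word.fstIdx (Word.equiv r) ≠ some k) (n : Gi k) (hn : n ∈ N k) :
    theta N (pGen N k r hr n hn) = (ell N r)⁻¹ * of n * ell N r := by
  simp [theta, pGen]

lemma pGen_mul (k : ι) (r : CoprodI (fun i => Gi i ⧸ N i))
    (hr : Word.fstIdx (Word.equiv r) ≠ some k) (n n' : Gi k) (hn : n ∈ N k) (hn' : n' ∈ N k) :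
    pGen N k r hr (n * n') (mul_mem hn hn') = pGen N k r hr n hn * pGen N k r hr n' hn' := by
  unfold pGen
  rw [← map_mul]
  congr 1
  apply Subtype.ext
  simp [mul_assoc]

lemma pGen_eq_one (k : ι) (r : CoprodI (fun i => Gi i ⧸ N i))
    (hr : Word.fstIdx (Word.equiv r) ≠ some k) {n : Gi k} {hn : n ∈ N k} (h : n = 1) :
    pGen N k r hr n hn = 1 := by
  subst h
  unfold pGen
  have : (⟨(ell N r)⁻¹ * of (1 : Gi k) * ell N r, pGen_mem N hr hn⟩ :
      ↥(CC N ⟨k, ⟨(ell N r)⁻¹, mem_TT N hr⟩⟩)) = 1 := by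
    apply Subtype.ext; simp
  rw [this, map_one]

/-- The correction letter of the action. -/
noncomputable def pLet (k : ι) (x : Gi k) (q : CoprodI (fun i => Gi i ⧸ N i)) : FP N :=
  pGen N k (tlq N k q) (tlq_fstIdx N k q) (nlet N k x q) (nlet_mem N k x q)

lemma nlet_one (k : ι) (q : CoprodI (fun i => Gi i ⧸ N i)) : nlet N k 1 q = 1 := by
  unfold nlet; simp

/-- The action of a letter on the product space. -/
noncomputable def actF (k : ι) (x : Gi k)
    (a : (CoprodI (fun i => Gi i ⧸ N i)) × FP N) :
    (CoprodI (fun i => Gi i ⧸ N i)) × FP N :=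
  (ofq N k (QuotientGroup.mk x) * a.1, pLet N k x a.1 * a.2)

lemma pLet_mul (k : ι) (x x' : Gi k) (q : CoprodI (fun i => Gi i ⧸ N i)) :
    pLet N k (x * x') q = pLet N k x (ofq N k (QuotientGroup.mk x') * q) * pLet N k x' q := by
  unfold pLet
  calc pGen N k (tlq N k q) (tlq_fstIdx N k q) (nlet N k (x * x') q) (nlet_mem N k (x * x') q)
      = pGen N k (tlq N k q) (tlq_fstIdx N k q)
          (nlet N k x (ofq N k (QuotientGroup.mk x') * q) * nlet N k x' q)
          (mul_mem (nlet_mem N k x _) (nlet_mem N k x' q)) :=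
        pGen_congr N k rfl (nlet_mul N k x x' q).symm
    _ = pGen N k (tlq N k q) (tlq_fstIdx N k q)
          (nlet N k x (ofq N k (QuotientGroup.mk x') * q)) (nlet_mem N k x _) *
        pGen N k (tlq N k q) (tlq_fstIdx N k q) (nlet N k x' q) (nlet_mem N k x' q) :=
        pGen_mul N k _ _ _ _ _ _
    _ = pGen N k (tlq N k (ofq N k (QuotientGroup.mk x') * q))
          (tlq_fstIdx N k _) (nlet N k x (ofq N k (QuotientGroup.mk x') * q))
          (nlet_mem N k x _) *
        pGen N k (tlq N k q) (tlq_fstIdx N k q) (nlet N k x' q) (nlet_mem N k x' q) := by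
        rw [pGen_congr N k (r := tlq N k (ofq N k (QuotientGroup.mk x') * q))
          (r' := tlq N k q) (tlq_mul N k _ q) rfl]

lemma actF_mul (k : ι) (x x' : Gi k) (a : (CoprodI (fun i => Gi i ⧸ N i)) × FP N) :
    actF N k (x * x') a = actF N k x (actF N k x' a) := by
  unfold actF
  refine Prod.ext ?_ ?_
  · simp [mul_assoc]
  · simp only
    rw [pLet_mul N k x x' a.1, mul_assoc]

lemma actF_one (k : ι) (a : (CoprodI (fun i => Gi i ⧸ N i)) × FP N) :
    actF N k 1 a = a := by
  unfold actF
  rw [pLet, pGen_eq_one N k _ _ (nlet_one N k a.1)]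
  simp

/-- The action of each factor as permutations. -/
noncomputable def AK (k : ι) :
    Gi k →* Equiv.Perm ((CoprodI (fun i => Gi i ⧸ N i)) × FP N) where
  toFun x :=
    { toFun := actF N k x
      invFun := actF N k x⁻¹
      left_inv := fun a => by rw [← actF_mul, inv_mul_cancel, actF_one]
      right_inv := fun a => by rw [← actF_mul, mul_inv_cancel, actF_one] }
  map_one' := Equiv.ext fun a => actF_one N k a
  map_mul' x y := Equiv.ext fun a => actF_mul N k x y a

/-- The action of the big free product. -/
noncomputable def AA : CoprodI Gi →* Equiv.Perm ((CoprodI (fun i => Gi i ⧸ N i)) × FP N) :=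
  lift (AK N)

lemma AA_of (k : ι) (x : Gi k) (a : (CoprodI (fun i => Gi i ⧸ N i)) × FP N) :
    AA N (of x) a = (ofq N k (QuotientGroup.mk x) * a.1, pLet N k x a.1 * a.2) := by
  simp only [AA, lift_of]
  rfl


lemma AA_ell (q : CoprodI (fun i => Gi i ⧸ N i)) (w : FP N) :
    AA N (ell N q) (1, w) = (q, w) := by
  suffices h : ∀ (W : Word (fun i => Gi i ⧸ N i)) (w : FP N),
      AA N (ell N (Word.prod W)) (1, w) = (Word.prod W, w) by
    have := h (Word.equiv q) w
    rwa [prod_equiv] at this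
  intro W
  induction W using Word.consRecOn with
  | empty => intro w; simp
  | cons i m W' hW' hm ih =>
    intro w
    rw [Word.prod_cons]
    have hfst : Word.fstIdx (Word.equiv (Word.prod W')) ≠ some i := by
      rw [equiv_prod]; exact hW'
    rw [ell_cons N i m hfst, map_mul]
    have : AA N (of (sig N i m)) (Word.prod W', w) = (ofq N i m * Word.prod W', w) := by
      rw [AA_of]
      refine Prod.ext ?_ ?_
      · simp
      · simp only
        rw [pLet, pGen_eq_one N i _ _ (nlet_sig N i m hfst), one_mul]
    rw [Equiv.Perm.mul_apply, ih w, this]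

lemma AA_ell_inv (q : CoprodI (fun i => Gi i ⧸ N i)) (w : FP N) :
    AA N (ell N q)⁻¹ (q, w) = (1, w) := by
  apply (AA N (ell N q)).injective
  rw [← Equiv.Perm.mul_apply, ← map_mul, mul_inv_cancel, map_one, Equiv.Perm.one_apply,
    AA_ell]

lemma AA_of_mem (k : ι) {n : Gi k} (hn : n ∈ N k) {r : CoprodI (fun i => Gi i ⧸ N i)}
    (hr : Word.fstIdx (Word.equiv r) ≠ some k) (w : FP N) :
    AA N (of n) (r, w) = (r, pGen N k r hr n hn * w) := by
  rw [AA_of]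
  refine Prod.ext ?_ ?_
  · simp [(QuotientGroup.eq_one_iff n).2 hn]
  · simp only
    rw [pLet, pGen_congr N k (tlq_of_ne N k hr) (nlet_of_mem N k hn hr)]

lemma pGen_eq_of (k : ι) (r : CoprodI (fun i => Gi i ⧸ N i))
    (hr : Word.fstIdx (Word.equiv r) ≠ some k) (n : Gi k) (hn : n ∈ N k)
    (tp : (ell N r)⁻¹ ∈ TT N k)
    (c : ↥(CC N ⟨k, ⟨(ell N r)⁻¹, tp⟩⟩))
    (hc : (c : CoprodI Gi) = (ell N r)⁻¹ * of n * ell N r) :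
    pGen N k r hr n hn = of (M := fun p : Σ i, ↥(TT N i) => ↥(CC N p))
      (i := ⟨k, ⟨(ell N r)⁻¹, tp⟩⟩) c := by
  unfold pGen
  exact congrArg _ (Subtype.ext hc.symm)

lemma theta_act (u w : FP N) : AA N (theta N u) (1, w) = (1, u * w) := by
  induction u using Monoid.CoprodI.induction_left generalizing w with
  | one => simp
  | mul c u' ih =>
    rename_i p
    obtain ⟨⟨k, t⟩, rfl⟩ : ∃ p' : Σ i, ↥(TT N i), p' = p := ⟨p, rfl⟩
    obtain ⟨tv, r, hr, hrt⟩ := t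
    subst hrt
    have hc2 := c.2
    obtain ⟨a, ha, hca⟩ := hc2
    obtain ⟨n, hn, rfl⟩ := ha
    have hc' : (c : CoprodI Gi) = (ell N r)⁻¹ * of n * ell N r := by
      rw [← hca]
      simp [MulAut.conj_apply]
    have theta_of : theta N (of c) = (c : CoprodI Gi) := by simp [theta]
    rw [map_mul, map_mul, Equiv.Perm.mul_apply, ih, theta_of, hc']
    rw [show (ell N r)⁻¹ * of n * ell N r = (ell N r)⁻¹ * (of n * ell N r) by group,
      map_mul, map_mul, Equiv.Perm.mul_apply, Equiv.Perm.mul_apply, AA_ell,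
      AA_of_mem N k hn hr, AA_ell_inv]
    rw [mul_assoc]
    congr 2
    exact pGen_eq_of N k r hr n hn _ c hc'

lemma theta_injective : Function.Injective (theta N) := by
  intro a b h
  have ha := theta_act N a 1
  have hb := theta_act N b 1
  rw [h, hb] at ha
  have := (Prod.ext_iff.1 ha).2
  simpa using this.symm

lemma theta_range_le : (theta N).range ≤ Subgroup.normalClosure (⋃ i, ((NN N i : Subgroup (CoprodI Gi)) : Set (CoprodI Gi))) := by
  rw [theta]
  apply lift_range_le
  intro p
  rw [Subgroup.range_subtype]
  rintro _ ⟨a, ⟨n, hn, rfl⟩, rfl⟩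
  have h1 : (of n : CoprodI Gi) ∈ Subgroup.normalClosure (⋃ i, ((NN N i : Subgroup (CoprodI Gi)) : Set (CoprodI Gi))) := by
    apply Subgroup.subset_normalClosure
    exact Set.mem_iUnion.2 ⟨p.1, ⟨n, hn, rfl⟩⟩
  simpa [MulAut.conj_apply] using Subgroup.Normal.conj_mem inferInstance _ h1 (p.2 : CoprodI Gi)

lemma NC_le_ker : Subgroup.normalClosure (⋃ i, ((NN N i : Subgroup (CoprodI Gi)) : Set (CoprodI Gi))) ≤ (phi N).ker := by
  apply Subgroup.normalClosure_le_normal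
  rintro x hx
  obtain ⟨_, ⟨i, rfl⟩, ⟨n, hn, rfl⟩⟩ := hx
  rw [SetLike.mem_coe, MonoidHom.mem_ker, phi_of]
  rw [(QuotientGroup.eq_one_iff n).2 hn, map_one]

lemma ell_phi_inv_mem (g : CoprodI Gi) : (ell N (phi N g))⁻¹ * g ∈ (theta N).range := by
  induction g using Monoid.CoprodI.induction_left with
  | one => exact (by simpa using (Subgroup.one_mem (theta N).range))
  | mul x g' ih =>
    rename_i k
    have hs := schreier N k x (phi N g')
    rw [map_mul, phi_of]
    have hD : (ell N (tlq N k (phi N g')))⁻¹ * of (nlet N k x (phi N g')) *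
        ell N (tlq N k (phi N g'))
        = (ell N (ofq N k (QuotientGroup.mk x) * phi N g'))⁻¹ * (of x * ell N (phi N g')) := by
      rw [hs]; group
    have key : (ell N (ofq N k (QuotientGroup.mk x) * phi N g'))⁻¹ * (of x * g')
        = ((ell N (tlq N k (phi N g')))⁻¹ * of (nlet N k x (phi N g')) *
            ell N (tlq N k (phi N g')))
          * ((ell N (phi N g'))⁻¹ * g') := by
      rw [hD]; group
    rw [key]
    exact Subgroup.mul_mem _
      ⟨pGen N k (tlq N k (phi N g')) (tlq_fstIdx N k _) (nlet N k x (phi N g'))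
        (nlet_mem N k x _), theta_pGen N k _ _ _ _⟩ ih

lemma ker_le_range : (phi N).ker ≤ (theta N).range := by
  intro g hg
  have h := ell_phi_inv_mem N g
  rw [MonoidHom.mem_ker] at hg
  rwa [hg, ell_one, inv_one, one_mul] at h

lemma ker_eq_NC : (phi N).ker = Subgroup.normalClosure (⋃ i, ((NN N i : Subgroup (CoprodI Gi)) : Set (CoprodI Gi))) :=
  le_antisymm (le_trans (ker_le_range N) (theta_range_le N)) (NC_le_ker N)

lemma range_eq_NC : (theta N).range = Subgroup.normalClosure (⋃ i, ((NN N i : Subgroup (CoprodI Gi)) : Set (CoprodI Gi))) :=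
  le_antisymm (theta_range_le N) (le_trans (NC_le_ker N) (ker_le_range N))


lemma head_one (i : ι) {r : CoprodI (fun j => Gi j ⧸ N j)} {y : Gi i ⧸ N i}
    (hr : Word.fstIdx (Word.equiv r) ≠ some i)
    (h : Word.fstIdx (Word.equiv (ofq N i y * r)) ≠ some i) : y = 1 := by
  by_contra hy
  apply h
  rw [equiv_mul, Word.of_smul_def, Word.equivPair_eq_of_fstIdx_ne hr]
  simp only [Word.rcons, mul_one]
  rw [dif_neg hy]
  exact Word.fstIdx_cons _ _ _ _

lemma mem_mapphi (i : ι) {q : CoprodI (fun j => Gi j ⧸ N j)} :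
    q ∈ Subgroup.map (phi N) (of : Gi i →* CoprodI Gi).range ↔ ∃ y, ofq N i y = q := by
  constructor
  · rintro ⟨_, ⟨x, rfl⟩, rfl⟩
    exact ⟨QuotientGroup.mk x, (phi_of N i x).symm⟩
  · rintro ⟨y, hy⟩
    exact ⟨of (sig N i y), ⟨sig N i y, rfl⟩, by rw [phi_of, sig_spec, hy]⟩

lemma TT_transversal (i : ι) :
    IsLeftTransversal
      ((of : Gi i →* CoprodI Gi).range ⊔
        Subgroup.normalClosure (⋃ j, ((NN N j : Subgroup (CoprodI Gi)) : Set (CoprodI Gi))))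
      (TT N i) := by
  rw [← ker_eq_NC, ← Subgroup.comap_map_eq]
  intro g
  obtain ⟨q, hq⟩ : ∃ q, phi N g = q := ⟨_, rfl⟩
  set y₀ := hdq N i q⁻¹ with hy₀
  set r₀ := tlq N i q⁻¹ with hr₀
  have hdec : q⁻¹ = ofq N i y₀ * r₀ := decomp N i q⁻¹
  have hqe : q = r₀⁻¹ * (ofq N i y₀)⁻¹ := by rw [← mul_inv_rev, ← hdec, inv_inv]
  have hr₀f : Word.fstIdx (Word.equiv r₀) ≠ some i := tlq_fstIdx N i q⁻¹
  have he : r₀ * q = (ofq N i y₀)⁻¹ := by rw [hqe]; group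
  refine ⟨(ell N r₀)⁻¹, ⟨mem_TT N hr₀f, ?_⟩, ?_⟩
  · rw [Subgroup.mem_comap, mem_mapphi]
    exact ⟨y₀⁻¹, by rw [map_inv, ← he, inv_inv, map_mul, phi_ell, hq]⟩
  · rintro t' ⟨⟨r', hr', rfl⟩, hmem⟩
    rw [Subgroup.mem_comap, mem_mapphi] at hmem
    obtain ⟨y', hy'⟩ := hmem
    rw [inv_inv, map_mul, phi_ell, hq] at hy'
    have hr'e : r' = ofq N i (y' * y₀) * r₀ := by
      rw [map_mul, mul_assoc, ← hdec, hy']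
      group
    have hr'f := hr'
    rw [hr'e] at hr'f
    have hone : y' * y₀ = 1 := head_one N i hr₀f hr'f
    rw [hone, map_one, one_mul] at hr'e
    rw [hr'e]

end CLAux

/-- **Cohen–Lyndon property for free products.**
Let `{Gi i}` be a family of groups and let `G = ∗ i, Gi i` be their free product, each
`Gi i` being regarded as a subgroup of `G` via the canonical embedding. If `N i` is a
normal subgroup of `Gi i` for each `i`, then the triple `(G, {Gi i}, {N i})` has the
Cohen-Lyndon property. -/
theorem coprodI_cohenLyndon {ι : Type*} {Gi : ι → Type*} [∀ i, Group (Gi i)]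
    (N : ∀ i, Subgroup (Gi i)) [∀ i, (N i).Normal] :
    CohenLyndonFamily
      (fun i => MonoidHom.range (Monoid.CoprodI.of : Gi i →* Monoid.CoprodI Gi))
      (fun i => (N i).map (Monoid.CoprodI.of : Gi i →* Monoid.CoprodI Gi)) := by
  refine ⟨CLAux.TT N, fun i => CLAux.TT_transversal N i, ?_, ?_⟩
  · exact CLAux.theta_injective N
  · exact CLAux.range_eq_NC N
end

section
/- Let {G_i}_{i∈I} be a family of groups and let G = ∗_{i∈I} G_i be their free product, with each G_i regarded as a subgroup of G via the canonical embedding. Let N_i be a normal subgroup of G_i for each i, let ⟪N⟫ be the normal closure in G of the subgroup generated by all N_i, let Q = G/⟪N⟫, and let Q_i = G_i/N_i, each identified with a subgroup of Q via the (injective) natural homomorphism. Then there is an isomorphism of ℤQ-modules Rel(G, ⟪N⟫) ≅ ⨁_{i∈I} (ℤQ ⊗_{ℤQ_i} Rel(G_i, N_i)). -/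
open scoped TensorProduct DirectSum

/-- The `ℤQ`-submodule of relations defining the induced module
`ℤQ ⊗_{ℤR} Rel(A, N)` (where `R = A/N` maps to `Q` via the homomorphism induced by `f`)
as a quotient of `ℤQ ⊗_ℤ Rel(A, N)`; here `Rel(A, N)` is the abelianization of `N`,
on which `h ∈ A` acts by conjugation. -/
noncomputable def relSub (Q : Type*) [Group Q] (A : Type*) [Group A]
    (N : Subgroup A) [N.Normal] (f : A →* Q) :
    Submodule (MonoidAlgebra ℤ Q)
      (MonoidAlgebra ℤ Q ⊗[ℤ] Additive (Abelianization ↥N)) :=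
  Submodule.span (MonoidAlgebra ℤ Q)
    {x | ∃ (a : MonoidAlgebra ℤ Q) (h : A) (m : Additive (Abelianization ↥N)),
      x = (a * MonoidAlgebra.of ℤ Q (f h)) ⊗ₜ[ℤ] m -
        a ⊗ₜ[ℤ] Additive.ofMul ((Abelianization.map (MulAut.conjNormal h).toMonoidHom)
          (Additive.toMul m))}

/-- `Rel(G, K)` (the abelianization of `K`, with the `Q = G/K` action induced by
conjugation) is isomorphic, as a `ℤQ`-module, to the direct sum over `i` of the induced
modules `ℤQ ⊗_{ℤR_i} Rel(A i, N i)`: there is an additive isomorphism which intertwines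
the conjugation action of `G` (inducing the `Q`-action on the left) with multiplication
by group elements of `Q` in the group ring (the `Q`-action on the right). -/
noncomputable def RelModuleIsoIndFam (G : Type*) [Group G] {ι : Type*} {A : ι → Type*}
    [∀ i, Group (A i)] (f : ∀ i, A i →* G) (N : ∀ i, Subgroup (A i)) [∀ i, (N i).Normal]
    (K : Subgroup G) [K.Normal] : Prop :=
  ∃ e : Additive (Abelianization ↥K) ≃+
      (⨁ i, ((MonoidAlgebra ℤ (G ⧸ K) ⊗[ℤ] Additive (Abelianization ↥(N i))) ⧸
        relSub (G ⧸ K) (A i) (N i) ((QuotientGroup.mk' K).comp (f i)))),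
    ∀ (g : G) (x : Additive (Abelianization ↥K)),
      e (Additive.ofMul ((Abelianization.map (MulAut.conjNormal g).toMonoidHom)
          (Additive.toMul x))) =
        MonoidAlgebra.of ℤ (G ⧸ K) (QuotientGroup.mk g) • e x

namespace CoprodIRelAux

open Monoid Subgroup

set_option linter.unusedSectionVars false

variable {ι : Type*} {Gi : ι → Type*} [∀ i, Group (Gi i)]

/-- Transport a group along an equality of indices. -/
def homOfEq : ∀ {j i : ι}, j = i → Gi j →* Gi i
  | _, _, rfl => MonoidHom.id _

@[simp] lemma homOfEq_rfl {i : ι} (g : Gi i) : homOfEq rfl g = g := rfl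

variable (N : ∀ i, Subgroup (Gi i)) [∀ i, (N i).Normal]

abbrev KK : Subgroup (CoprodI Gi) :=
  Subgroup.normalClosure
    (⋃ i, (((N i).map (Monoid.CoprodI.of : Gi i →* Monoid.CoprodI Gi)) :
      Set (Monoid.CoprodI Gi)))

abbrev QQ := CoprodI Gi ⧸ KK N

abbrev pr : CoprodI Gi →* QQ N := QuotientGroup.mk' (KK N)

abbrev pri (i : ι) : Gi i →* QQ N := (pr N).comp CoprodI.of

lemma of_mem_KK {i : ι} {n : Gi i} (hn : n ∈ N i) : CoprodI.of n ∈ KK N :=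
  Subgroup.subset_normalClosure (Set.mem_iUnion.2 ⟨i, ⟨n, hn, rfl⟩⟩)

/-- The retraction onto the `i`-th filled factor. -/
noncomputable def chi (i : ι) : CoprodI Gi →* Gi i ⧸ N i :=
  CoprodI.lift fun j =>
    @dite _ (j = i) (Classical.dec _)
      (fun h => (QuotientGroup.mk' (N i)).comp (homOfEq h)) (fun _ => 1)

lemma chi_of_self (i : ι) (g : Gi i) : chi N i (CoprodI.of g) = QuotientGroup.mk g := by
  rw [chi, CoprodI.lift_of, dif_pos rfl]
  rfl

lemma KK_le_ker_chi (i : ι) : KK N ≤ (chi N i).ker := by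
  apply Subgroup.normalClosure_le_normal
  rintro x hx
  rw [Set.mem_iUnion] at hx
  obtain ⟨j, n, hn, rfl⟩ := hx
  rw [SetLike.mem_coe, MonoidHom.mem_ker, chi, CoprodI.lift_of]
  by_cases h : j = i
  · subst h
    rw [dif_pos rfl]
    simpa [QuotientGroup.eq_one_iff] using hn
  · rw [dif_neg h]
    rfl

lemma pri_eq_one_iff {i : ι} {g : Gi i} : pri N i g = 1 ↔ g ∈ N i := by
  constructor
  · intro h
    have hK : CoprodI.of g ∈ KK N := (QuotientGroup.eq_one_iff _).1 h
    have h2 := KK_le_ker_chi N i hK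
    rw [MonoidHom.mem_ker, chi_of_self, QuotientGroup.eq_one_iff] at h2
    exact h2
  · intro h
    exact (QuotientGroup.eq_one_iff _).2 (of_mem_KK N h)

/-! ### Transversals -/

noncomputable def cb (i : ι) (q : QQ N) : QQ N :=
  (QuotientGroup.mk (s := (pri N i).range) q).out

lemma cb_spec (i : ι) (q : QQ N) : ∃ g : Gi i, pri N i g = (cb N i q)⁻¹ * q := by
  have h : QuotientGroup.mk (s := (pri N i).range) (cb N i q) = QuotientGroup.mk q :=
    QuotientGroup.out_eq' _
  exact QuotientGroup.eq.mp h

noncomputable def wi (i : ι) (q : QQ N) : Gi i := (cb_spec N i q).choose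

lemma hwi (i : ι) (q : QQ N) : pri N i (wi N i q) = (cb N i q)⁻¹ * q :=
  (cb_spec N i q).choose_spec

lemma cb_mul_pri_wi (i : ι) (q : QQ N) : cb N i q * pri N i (wi N i q) = q := by
  rw [hwi, mul_inv_cancel_left]

lemma cb_mul (i : ι) (q : QQ N) (h : Gi i) : cb N i (q * pri N i h) = cb N i q := by
  unfold cb
  congr 1
  rw [QuotientGroup.eq]
  have heq : (q * pri N i h)⁻¹ * q = (pri N i h)⁻¹ := by group
  rw [heq]
  exact inv_mem ⟨h, rfl⟩

noncomputable def nco (i : ι) (q : QQ N) (g : Gi i) : Gi i :=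
  wi N i q * g * (wi N i (q * pri N i g))⁻¹

lemma nco_mem (i : ι) (q : QQ N) (g : Gi i) : nco N i q g ∈ N i := by
  rw [← pri_eq_one_iff (N := N)]
  rw [nco, map_mul, map_mul, map_inv, hwi, hwi, cb_mul]
  group

lemma nco_one (i : ι) (q : QQ N) : nco N i q 1 = 1 := by
  simp [nco]

lemma nco_mul (i : ι) (q : QQ N) (h g : Gi i) :
    nco N i q (h * g) = nco N i q h * nco N i (q * pri N i h) g := by
  have hq : q * pri N i (h * g) = q * pri N i h * pri N i g := by
    rw [map_mul, mul_assoc]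
  rw [nco, nco, nco, hq]
  group

lemma nco_self (i : ι) (q : QQ N) (n : Gi i) (hn : n ∈ N i) :
    nco N i q n = wi N i q * n * (wi N i q)⁻¹ := by
  rw [nco, (pri_eq_one_iff N).2 hn, mul_one]


/-! ### The universal crossed-homomorphism target `TT` -/

abbrev XX := QQ N × (Σ i, Gi i)

def Srel : Set (FreeAbelianGroup (XX N)) :=
  {x | (∃ (i : ι) (q : QQ N), x = FreeAbelianGroup.of (q, ⟨i, 1⟩)) ∨
    ∃ (i : ι) (q : QQ N) (h g : Gi i),
      x = FreeAbelianGroup.of (q * pri N i h, ⟨i, g⟩) + FreeAbelianGroup.of (q, ⟨i, h⟩)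
        - FreeAbelianGroup.of (q, ⟨i, h * g⟩)}

def RT : AddSubgroup (FreeAbelianGroup (XX N)) := AddSubgroup.closure (Srel N)

abbrev TT := FreeAbelianGroup (XX N) ⧸ RT N

def mkT : FreeAbelianGroup (XX N) →+ TT N := QuotientAddGroup.mk' (RT N)

lemma mkT_eq {x y : FreeAbelianGroup (XX N)} (h : x - y ∈ RT N) : mkT N x = mkT N y := by
  have h2 : mkT N (x - y) = 0 := (QuotientAddGroup.eq_zero_iff _).2 h
  rw [map_sub, sub_eq_zero] at h2
  exact h2

def mapQ (q' : QQ N) : FreeAbelianGroup (XX N) →+ FreeAbelianGroup (XX N) :=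
  FreeAbelianGroup.map (fun p => (q' * p.1, p.2))

lemma mapQ_of (q' : QQ N) (p : XX N) :
    mapQ N q' (FreeAbelianGroup.of p) = FreeAbelianGroup.of (q' * p.1, p.2) :=
  FreeAbelianGroup.map_of_apply _

lemma mapQ_mapQ (q1 q2 : QQ N) (x : FreeAbelianGroup (XX N)) :
    mapQ N q1 (mapQ N q2 x) = mapQ N (q1 * q2) x := by
  have h : (mapQ N q1).comp (mapQ N q2) = mapQ N (q1 * q2) := by
    apply FreeAbelianGroup.lift_ext
    intro p
    simp [mapQ_of, mul_assoc]
  exact DFunLike.congr_fun h x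

lemma mapQ_one (x : FreeAbelianGroup (XX N)) : mapQ N 1 x = x := by
  have h : mapQ N 1 = AddMonoidHom.id _ := by
    apply FreeAbelianGroup.lift_ext
    intro p
    simp [mapQ_of]
  rw [h]; rfl

lemma mapQ_mem_RT (q' : QQ N) {x : FreeAbelianGroup (XX N)} (hx : x ∈ RT N) :
    mapQ N q' x ∈ RT N := by
  refine AddSubgroup.closure_induction ?_ ?_ ?_ ?_ hx
  · intro y hy
    apply AddSubgroup.subset_closure
    rcases hy with ⟨i, q, rfl⟩ | ⟨i, q, h, g, rfl⟩
    · exact Or.inl ⟨i, q' * q, by rw [mapQ_of]⟩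
    · refine Or.inr ⟨i, q' * q, h, g, ?_⟩
      rw [map_sub, map_add, mapQ_of, mapQ_of, mapQ_of, mul_assoc]
  · simpa using (RT N).zero_mem
  · intro a b _ _ ha hb
    rw [map_add]; exact add_mem ha hb
  · intro a _ ha
    rw [map_neg]; exact neg_mem ha

def TmapA (q' : QQ N) : TT N →+ TT N :=
  QuotientAddGroup.lift (RT N) ((mkT N).comp (mapQ N q'))
    (fun x hx => (QuotientAddGroup.eq_zero_iff _).2 (mapQ_mem_RT N q' hx))

lemma TmapA_mk (q' : QQ N) (x : FreeAbelianGroup (XX N)) :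
    TmapA N q' (mkT N x) = mkT N (mapQ N q' x) := rfl

lemma TmapA_TmapA (q1 q2 : QQ N) (x : TT N) :
    TmapA N q1 (TmapA N q2 x) = TmapA N (q1 * q2) x := by
  obtain ⟨y, rfl⟩ := QuotientAddGroup.mk'_surjective (RT N) x
  show TmapA N q1 (TmapA N q2 (mkT N y)) = TmapA N (q1 * q2) (mkT N y)
  rw [TmapA_mk, TmapA_mk, TmapA_mk, mapQ_mapQ]

lemma TmapA_one (x : TT N) : TmapA N 1 x = x := by
  obtain ⟨y, rfl⟩ := QuotientAddGroup.mk'_surjective (RT N) x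
  show TmapA N 1 (mkT N y) = mkT N y
  rw [TmapA_mk, mapQ_one]

noncomputable def TAut (q' : QQ N) : AddAut (TT N) :=
  AddMonoidHom.toAddEquiv (TmapA N q') (TmapA N q'⁻¹)
    (by
      ext x
      simp only [AddMonoidHom.coe_comp, Function.comp_apply, AddMonoidHom.id_apply]
      rw [TmapA_TmapA, inv_mul_cancel, TmapA_one])
    (by
      ext x
      simp only [AddMonoidHom.coe_comp, Function.comp_apply, AddMonoidHom.id_apply]
      rw [TmapA_TmapA, mul_inv_cancel, TmapA_one])

noncomputable def phiQ : QQ N →* MulAut (Multiplicative (TT N)) :=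
  MonoidHom.mk' (fun q' => AddEquiv.toMultiplicative (TAut N q'))
    (fun a b => by
      ext x
      show TmapA N (a * b) _ = TmapA N a (TmapA N b _)
      rw [TmapA_TmapA])

lemma phiQ_apply (q' : QQ N) (x : TT N) :
    phiQ N q' (Multiplicative.ofAdd x) = Multiplicative.ofAdd (TmapA N q' x) := rfl

abbrev HH := SemidirectProduct (Multiplicative (TT N)) (QQ N) (phiQ N)

noncomputable def ThetaFam (i : ι) : Gi i →* HH N :=
  MonoidHom.mk'
    (fun g => ⟨Multiplicative.ofAdd (mkT N (FreeAbelianGroup.of (1, ⟨i, g⟩))), pri N i g⟩)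
    (fun g h => by
      refine SemidirectProduct.ext ?_ ?_
      · show Multiplicative.ofAdd (mkT N (FreeAbelianGroup.of (1, ⟨i, g * h⟩))) =
          Multiplicative.ofAdd (mkT N (FreeAbelianGroup.of (1, ⟨i, g⟩))) *
            phiQ N (pri N i g) (Multiplicative.ofAdd (mkT N (FreeAbelianGroup.of (1, ⟨i, h⟩))))
        rw [phiQ_apply, TmapA_mk, mapQ_of]
        rw [← ofAdd_add]
        congr 1
        rw [← map_add]
        refine (mkT_eq N ?_).symm
        apply AddSubgroup.subset_closure
        refine Or.inr ⟨i, 1, g, h, ?_⟩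
        rw [one_mul, mul_one]
        abel
      · show pri N i (g * h) = pri N i g * pri N i h
        rw [map_mul])

noncomputable def Theta : CoprodI Gi →* HH N := CoprodI.lift (ThetaFam N)

lemma Theta_of {i : ι} (g : Gi i) : Theta N (CoprodI.of g) = ThetaFam N i g :=
  CoprodI.lift_of _ _

lemma Theta_right (g : CoprodI Gi) : (Theta N g).right = pr N g := by
  have h : SemidirectProduct.rightHom.comp (Theta N) = pr N := by
    apply CoprodI.ext_hom
    intro i
    ext g
    show (Theta N (CoprodI.of g)).right = pri N i g
    rw [Theta_of]
    rfl
  exact DFunLike.congr_fun h g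

lemma conj_left {a b : HH N} (hb : b.right = 1) :
    (a * b * a⁻¹).left = phiQ N a.right b.left := by
  simp only [SemidirectProduct.mul_left, SemidirectProduct.mul_right,
    SemidirectProduct.inv_left, SemidirectProduct.inv_right, hb, mul_one]
  have h1 : phiQ N a.right (phiQ N a.right⁻¹ a.left⁻¹) = a.left⁻¹ := by
    have h2 : phiQ N a.right⁻¹ = (phiQ N a.right).symm := by
      rw [map_inv]; rfl
    rw [h2]
    exact (phiQ N a.right).apply_symm_apply _
  rw [h1, mul_comm a.left, mul_inv_cancel_right]

lemma Theta_of_mem_right_eq_one {i : ι} {n : Gi i} (hn : n ∈ N i) :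
    (Theta N (CoprodI.of n)).right = 1 := by
  rw [Theta_right]
  exact (QuotientGroup.eq_one_iff _).2 (of_mem_KK N hn)

lemma Theta_conj (g : CoprodI Gi) {i : ι} {n : Gi i} (hn : n ∈ N i) :
    (Theta N (g * CoprodI.of n * g⁻¹)).left =
      Multiplicative.ofAdd (mkT N (FreeAbelianGroup.of (pr N g, ⟨i, n⟩))) := by
  rw [map_mul, map_mul, map_inv, conj_left N (Theta_of_mem_right_eq_one N hn)]
  rw [Theta_right, Theta_of]
  show phiQ N (pr N g)
      (Multiplicative.ofAdd (mkT N (FreeAbelianGroup.of (1, ⟨i, n⟩)))) = _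
  rw [phiQ_apply, TmapA_mk, mapQ_of, mul_one]

noncomputable def DK : ↥(KK N) →* Multiplicative (TT N) :=
  MonoidHom.mk' (fun k => (Theta N k.1).left)
    (fun a b => by
      have ha : (Theta N a.1).right = 1 := by
        rw [Theta_right]
        exact (QuotientGroup.eq_one_iff _).2 a.2
      show (Theta N ((a * b : ↥(KK N)) : CoprodI Gi)).left = _
      rw [Subgroup.coe_mul, map_mul, SemidirectProduct.mul_left, ha, map_one]
      rfl)

lemma DK_conj (g : CoprodI Gi) {i : ι} {n : Gi i} (hn : n ∈ N i)
    (hmem : g * CoprodI.of n * g⁻¹ ∈ KK N) :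
    DK N ⟨g * CoprodI.of n * g⁻¹, hmem⟩ =
      Multiplicative.ofAdd (mkT N (FreeAbelianGroup.of (pr N g, ⟨i, n⟩))) := by
  show (Theta N (g * CoprodI.of n * g⁻¹)).left = _
  exact Theta_conj N g hn


/-! ### The induced modules and the map `P` -/

abbrev IndM (i : ι) :=
  (MonoidAlgebra ℤ (QQ N) ⊗[ℤ] Additive (Abelianization ↥(N i))) ⧸
    relSub (QQ N) (Gi i) (N i) ((QuotientGroup.mk' (KK N)).comp
      (Monoid.CoprodI.of : Gi i →* Monoid.CoprodI Gi))

abbrev MM := ⨁ i, IndM N i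

noncomputable instance instAddCommGroupMM : AddCommGroup (MM N) :=
  DirectSum.instAddCommGroup (β := fun i => IndM N i)

/-- The class `[n] ∈ ℤQ ⊗ N_iᵃᵇ / relSub` attached to `q` and `n ∈ N i`. -/
noncomputable def gen (i : ι) (q : QQ N) (n : Gi i) (hn : n ∈ N i) : IndM N i :=
  Submodule.Quotient.mk
    (MonoidAlgebra.of ℤ (QQ N) q ⊗ₜ[ℤ]
      Additive.ofMul (Abelianization.of (⟨n, hn⟩ : ↥(N i))))

lemma relSub_mk_eq (i : ι) (a : MonoidAlgebra ℤ (QQ N)) (h : Gi i)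
    (m : Additive (Abelianization ↥(N i))) :
    (Submodule.Quotient.mk ((a * MonoidAlgebra.of ℤ (QQ N) (pri N i h)) ⊗ₜ[ℤ] m) :
        IndM N i) =
      Submodule.Quotient.mk (a ⊗ₜ[ℤ]
        Additive.ofMul ((Abelianization.map (MulAut.conjNormal h).toMonoidHom)
          (Additive.toMul m))) := by
  rw [Submodule.Quotient.eq]
  exact Submodule.subset_span ⟨a, h, m, rfl⟩

lemma gen_conj (i : ι) (q : QQ N) (h : Gi i) (n : Gi i) (hn : n ∈ N i)
    (hn' : h * n * h⁻¹ ∈ N i) :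
    gen N i (q * pri N i h) n hn = gen N i q (h * n * h⁻¹) hn' := by
  unfold gen
  have h2 : (Abelianization.map (MulAut.conjNormal h).toMonoidHom)
      (Abelianization.of (⟨n, hn⟩ : ↥(N i))) =
        Abelianization.of (⟨h * n * h⁻¹, hn'⟩ : ↥(N i)) := by
    rw [Abelianization.map_of,
      show (MulAut.conjNormal h).toMonoidHom (⟨n, hn⟩ : ↥(N i)) =
          (⟨h * n * h⁻¹, hn'⟩ : ↥(N i)) from
        Subtype.ext (MulAut.conjNormal_apply h ⟨n, hn⟩)]
  have h1 := relSub_mk_eq N i (MonoidAlgebra.of ℤ (QQ N) q) h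
    (Additive.ofMul (Abelianization.of (⟨n, hn⟩ : ↥(N i))))
  rw [← map_mul,
    show Additive.toMul (Additive.ofMul (Abelianization.of (⟨n, hn⟩ : ↥(N i)))) =
      Abelianization.of (⟨n, hn⟩ : ↥(N i)) from rfl, h2] at h1
  exact h1

lemma gen_diag (i : ι) (q : QQ N) (n : Gi i) (hn : n ∈ N i)
    (hn' : wi N i q * n * (wi N i q)⁻¹ ∈ N i) :
    gen N i (cb N i q) (wi N i q * n * (wi N i q)⁻¹) hn' = gen N i q n hn := by
  rw [← gen_conj N i (cb N i q) (wi N i q) n hn hn', cb_mul_pri_wi]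

lemma gen_congr (i : ι) (q : QQ N) {n n' : Gi i} (h : n = n') (hn : n ∈ N i)
    (hn' : n' ∈ N i) : gen N i q n hn = gen N i q n' hn' := by
  unfold gen
  rw [show (⟨n, hn⟩ : ↥(N i)) = ⟨n', hn'⟩ from Subtype.ext h]

variable [DecidableEq ι]

noncomputable def Pval : XX N → MM N := fun p =>
  DirectSum.of (fun i => IndM N i) p.2.1
    (gen N p.2.1 (cb N p.2.1 p.1) (nco N p.2.1 p.1 p.2.2) (nco_mem N _ _ _))

noncomputable def P0 : FreeAbelianGroup (XX N) →+ MM N :=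
  FreeAbelianGroup.lift (Pval N)

lemma P0_of (p : XX N) : P0 N (FreeAbelianGroup.of p) = Pval N p :=
  FreeAbelianGroup.lift_apply_of _ _

lemma gen_one (i : ι) (q : QQ N) (h1 : (1 : Gi i) ∈ N i) : gen N i q 1 h1 = 0 := by
  unfold gen
  rw [show (⟨(1 : Gi i), h1⟩ : ↥(N i)) = 1 from rfl, map_one,
    show Additive.ofMul (1 : Abelianization ↥(N i)) = 0 from rfl,
    TensorProduct.tmul_zero, Submodule.Quotient.mk_zero]

lemma gen_mul (i : ι) (q : QQ N) (n m : Gi i) (hn : n ∈ N i) (hm : m ∈ N i)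
    (hnm : n * m ∈ N i) :
    gen N i q (n * m) hnm = gen N i q n hn + gen N i q m hm := by
  unfold gen
  rw [show (⟨n * m, hnm⟩ : ↥(N i)) = ⟨n, hn⟩ * ⟨m, hm⟩ from rfl, map_mul,
    show Additive.ofMul (Abelianization.of (⟨n, hn⟩ : ↥(N i)) *
        Abelianization.of (⟨m, hm⟩ : ↥(N i))) =
      Additive.ofMul (Abelianization.of (⟨n, hn⟩ : ↥(N i))) +
        Additive.ofMul (Abelianization.of (⟨m, hm⟩ : ↥(N i))) from rfl,
    TensorProduct.tmul_add, Submodule.Quotient.mk_add]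

lemma P0_RT : ∀ x ∈ RT N, P0 N x = 0 := by
  intro x hx
  refine AddSubgroup.closure_induction ?_ ?_ ?_ ?_ hx
  · rintro y (⟨i, q, rfl⟩ | ⟨i, q, h, g, rfl⟩)
    · rw [P0_of]
      unfold Pval
      show DirectSum.of (fun i => IndM N i) i _ = 0
      rw [gen_congr N i (cb N i q) (nco_one N i q) (nco_mem N _ _ _) ((N i).one_mem),
        gen_one, map_zero]
    · rw [map_sub, map_add, P0_of, P0_of, P0_of]
      unfold Pval
      have hcb : cb N i (q * pri N i h) = cb N i q := cb_mul N i q h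
      have hnco : nco N i q (h * g) = nco N i q h * nco N i (q * pri N i h) g :=
        nco_mul N i q h g
      show DirectSum.of (fun i => IndM N i) i _ + DirectSum.of (fun i => IndM N i) i _
          - DirectSum.of (fun i => IndM N i) i _ = 0
      have eA : gen N i (cb N i (q * pri N i h)) (nco N i (q * pri N i h) g)
          (nco_mem N _ _ _) = gen N i (cb N i q) (nco N i (q * pri N i h) g)
            (nco_mem N _ _ _) := by rw [hcb]
      have eC : gen N i (cb N i q) (nco N i q (h * g)) (nco_mem N _ _ _) =
          gen N i (cb N i q) (nco N i q h) (nco_mem N _ _ _) +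
            gen N i (cb N i q) (nco N i (q * pri N i h) g) (nco_mem N _ _ _) :=
        (gen_congr N i (cb N i q) hnco (nco_mem N _ _ _)
          (mul_mem (nco_mem N _ _ _) (nco_mem N _ _ _))).trans
          (gen_mul N i _ _ _ (nco_mem N _ _ _) (nco_mem N _ _ _) _)
      rw [eA, eC, map_add]
      abel
  · exact map_zero _
  · intro a b _ _ ha hb
    rw [map_add, ha, hb, add_zero]
  · intro a _ ha
    rw [map_neg, ha, neg_zero]

noncomputable def P : TT N →+ MM N :=
  QuotientAddGroup.lift (RT N) (P0 N)
    (fun x hx => P0_RT N x hx)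

lemma P_mk (x : FreeAbelianGroup (XX N)) : P N (mkT N x) = P0 N x := rfl

lemma P_gen (i : ι) (q : QQ N) (n : Gi i) (hn : n ∈ N i) :
    P N (mkT N (FreeAbelianGroup.of (q, ⟨i, n⟩))) =
      DirectSum.of (fun i => IndM N i) i (gen N i q n hn) := by
  rw [P_mk, P0_of]
  unfold Pval
  congr 1
  have h1 : nco N i q n = wi N i q * n * (wi N i q)⁻¹ := nco_self N i q n hn
  have h2 : wi N i q * n * (wi N i q)⁻¹ ∈ N i := h1 ▸ nco_mem N i q n
  rw [gen_congr N i (cb N i q) h1 (nco_mem N _ _ _) h2, gen_diag N i q n hn]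


/-! ### The inverse map `Phi` -/

abbrev EE := Additive (Abelianization ↥(KK N))

lemma ab_conj (a b : ↥(KK N)) :
    Abelianization.of (a * b * a⁻¹) = Abelianization.of b := by
  rw [map_mul, map_mul, map_inv, mul_comm (Abelianization.of a) (Abelianization.of b),
    mul_inv_cancel_right]

lemma conj_eq (g₁ g₂ : CoprodI Gi) (hg : pr N g₁ = pr N g₂) (x : CoprodI Gi)
    (h1 : g₁ * x * g₁⁻¹ ∈ KK N) (h2 : g₂ * x * g₂⁻¹ ∈ KK N) :
    (Abelianization.of (⟨g₁ * x * g₁⁻¹, h1⟩ : ↥(KK N))) =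
      Abelianization.of (⟨g₂ * x * g₂⁻¹, h2⟩ : ↥(KK N)) := by
  have hk : g₁⁻¹ * g₂ ∈ KK N := by
    have := QuotientGroup.eq (s := KK N) (a := g₁) (b := g₂)
    exact this.mp hg
  have hc : g₁ * (g₁⁻¹ * g₂) * g₁⁻¹ ∈ KK N :=
    Subgroup.Normal.conj_mem inferInstance _ hk g₁
  have key : (⟨g₂ * x * g₂⁻¹, h2⟩ : ↥(KK N)) =
      ⟨g₁ * (g₁⁻¹ * g₂) * g₁⁻¹, hc⟩ * ⟨g₁ * x * g₁⁻¹, h1⟩ *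
        (⟨g₁ * (g₁⁻¹ * g₂) * g₁⁻¹, hc⟩)⁻¹ := by
    ext
    show g₂ * x * g₂⁻¹ = g₁ * (g₁⁻¹ * g₂) * g₁⁻¹ * (g₁ * x * g₁⁻¹) *
      (g₁ * (g₁⁻¹ * g₂) * g₁⁻¹)⁻¹
    group
  rw [key, ab_conj]

def inclK (i : ι) : ↥(N i) →* ↥(KK N) :=
  ((CoprodI.of).comp (N i).subtype).codRestrict (KK N) (fun n => of_mem_KK N n.2)

noncomputable def conjK (i : ι) (q : QQ N) : ↥(N i) →* ↥(KK N) :=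
  ((MulAut.conjNormal (Quotient.out q)).toMonoidHom).comp (inclK N i)

noncomputable def fAb (i : ι) (q : QQ N) :
    Abelianization ↥(N i) →* Abelianization ↥(KK N) :=
  Abelianization.map (conjK N i q)

lemma pr_out (q : QQ N) : pr N (Quotient.out q) = q := QuotientGroup.out_eq' q

lemma conjK_apply (i : ι) (q : QQ N) (n : Gi i) (hn : n ∈ N i)
    (hmem : Quotient.out q * CoprodI.of n * (Quotient.out q)⁻¹ ∈ KK N) :
    conjK N i q ⟨n, hn⟩ = ⟨Quotient.out q * CoprodI.of n * (Quotient.out q)⁻¹, hmem⟩ := by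
  apply Subtype.ext
  exact MulAut.conjNormal_apply _ _

lemma fAb_of (i : ι) (q : QQ N) (n : Gi i) (hn : n ∈ N i)
    (hmem : Quotient.out q * CoprodI.of n * (Quotient.out q)⁻¹ ∈ KK N) :
    fAb N i q (Abelianization.of ⟨n, hn⟩) =
      Abelianization.of ⟨Quotient.out q * CoprodI.of n * (Quotient.out q)⁻¹, hmem⟩ := by
  unfold fAb
  rw [Abelianization.map_of, conjK_apply N i q n hn hmem]

lemma conj_mem_KK (g : CoprodI Gi) {x : CoprodI Gi} (hx : x ∈ KK N) :
    g * x * g⁻¹ ∈ KK N :=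
  Subgroup.Normal.conj_mem inferInstance _ hx g

lemma fAb_comp (i : ι) (q : QQ N) (h : Gi i) :
    fAb N i (q * pri N i h) =
      (fAb N i q).comp (Abelianization.map (MulAut.conjNormal h).toMonoidHom) := by
  apply Abelianization.hom_ext
  ext z
  show fAb N i (q * pri N i h) (Abelianization.of z) =
    fAb N i q (Abelianization.of ((MulAut.conjNormal h).toMonoidHom z))
  obtain ⟨n, hn⟩ := z
  have hc : (MulAut.conjNormal h).toMonoidHom (⟨n, hn⟩ : ↥(N i)) =
      (⟨h * n * h⁻¹, Subgroup.Normal.conj_mem inferInstance n hn h⟩ : ↥(N i)) :=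
    Subtype.ext (MulAut.conjNormal_apply h ⟨n, hn⟩)
  rw [hc]
  rw [fAb_of N i (q * pri N i h) n hn
    (conj_mem_KK N _ (of_mem_KK N hn)),
    fAb_of N i q (h * n * h⁻¹) _ (by
      rw [map_mul, map_mul, map_inv]
      exact conj_mem_KK N _ (conj_mem_KK N _ (of_mem_KK N hn)))]
  · have hx : CoprodI.of (h * n * h⁻¹) =
        CoprodI.of h * CoprodI.of n * (CoprodI.of h)⁻¹ := by
      rw [map_mul, map_mul, map_inv]
    have goal2 : Abelianization.of
        (⟨Quotient.out (q * pri N i h) * CoprodI.of n * (Quotient.out (q * pri N i h))⁻¹,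
          conj_mem_KK N _ (of_mem_KK N hn)⟩ : ↥(KK N)) =
        Abelianization.of
        (⟨(Quotient.out q * CoprodI.of h) * CoprodI.of n *
            (Quotient.out q * CoprodI.of h)⁻¹,
          conj_mem_KK N _ (of_mem_KK N hn)⟩ : ↥(KK N)) := by
      apply conj_eq
      rw [pr_out, map_mul, pr_out]
      rfl
    rw [goal2]
    congr 1
    apply Subtype.ext
    show Quotient.out q * CoprodI.of h * CoprodI.of n *
        (Quotient.out q * CoprodI.of h)⁻¹ =
      Quotient.out q * CoprodI.of (h * n * h⁻¹) * (Quotient.out q)⁻¹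
    rw [hx]
    group

/-- The bilinear pairing underlying `Phi`. -/
noncomputable def linB (i : ι) :
    MonoidAlgebra ℤ (QQ N) →ₗ[ℤ]
      Additive (Abelianization ↥(N i)) →ₗ[ℤ] EE N :=
  (Finsupp.lsum ℤ (fun q => LinearMap.toSpanSingleton ℤ _
    ((MonoidHom.toAdditive (fAb N i q)).toIntLinearMap))).comp
    (MonoidAlgebra.coeffLinearEquiv ℤ).toLinearMap

noncomputable def PhiTen (i : ι) :
    (MonoidAlgebra ℤ (QQ N) ⊗[ℤ] Additive (Abelianization ↥(N i))) →ₗ[ℤ] EE N :=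
  TensorProduct.lift (linB N i)

lemma PhiTen_of_tmul (i : ι) (q : QQ N) (m : Additive (Abelianization ↥(N i))) :
    PhiTen N i (MonoidAlgebra.of ℤ (QQ N) q ⊗ₜ[ℤ] m) =
      Additive.ofMul (fAb N i q (Additive.toMul m)) := by
  unfold PhiTen
  erw [TensorProduct.lift.tmul]
  show (linB N i (MonoidAlgebra.of ℤ (QQ N) q)) m = _
  unfold linB
  erw [LinearMap.comp_apply, Finsupp.lsum_single]
  show (1 : ℤ) • Additive.ofMul (fAb N i q (Additive.toMul m)) = _
  rw [one_smul]

lemma PhiTen_mul_of (i : ι) (a : MonoidAlgebra ℤ (QQ N)) (h : Gi i)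
    (m : Additive (Abelianization ↥(N i))) :
    PhiTen N i ((a * MonoidAlgebra.of ℤ (QQ N) (pri N i h)) ⊗ₜ[ℤ] m) =
      PhiTen N i (a ⊗ₜ[ℤ]
        Additive.ofMul ((Abelianization.map (MulAut.conjNormal h).toMonoidHom)
          (Additive.toMul m))) := by
  induction a using MonoidAlgebra.induction_on with
  | of q =>
    rw [← map_mul]
    rw [PhiTen_of_tmul, PhiTen_of_tmul]
    rw [fAb_comp N i q h]
    rfl
  | add f g hf hg =>
    rw [add_mul, TensorProduct.add_tmul, TensorProduct.add_tmul, map_add, map_add, hf, hg]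
  | smul r f hf =>
    rw [smul_mul_assoc, ← TensorProduct.smul_tmul', ← TensorProduct.smul_tmul', map_smul,
      map_smul, hf]

lemma PhiTen_vanish (i : ι) :
    ∀ x ∈ relSub (QQ N) (Gi i) (N i) ((QuotientGroup.mk' (KK N)).comp
      (Monoid.CoprodI.of : Gi i →* Monoid.CoprodI Gi)), PhiTen N i x = 0 := by
  intro x hx
  have main : ∀ x ∈ relSub (QQ N) (Gi i) (N i) ((QuotientGroup.mk' (KK N)).comp
      (Monoid.CoprodI.of : Gi i →* Monoid.CoprodI Gi)),
      ∀ r : MonoidAlgebra ℤ (QQ N), PhiTen N i (r • x) = 0 := by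
    intro x hx
    refine Submodule.span_induction ?_ ?_ ?_ ?_ hx
    · rintro y ⟨a, h, m, rfl⟩ r
      rw [smul_sub]
      rw [show r • ((a * MonoidAlgebra.of ℤ (QQ N) (pri N i h)) ⊗ₜ[ℤ] m) =
        ((r * a) * MonoidAlgebra.of ℤ (QQ N) (pri N i h)) ⊗ₜ[ℤ] m by
          rw [TensorProduct.smul_tmul', smul_eq_mul, mul_assoc]]
      rw [show r • (a ⊗ₜ[ℤ] Additive.ofMul
          ((Abelianization.map (MulAut.conjNormal h).toMonoidHom) (Additive.toMul m))) =
        (r * a) ⊗ₜ[ℤ] Additive.ofMul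
          ((Abelianization.map (MulAut.conjNormal h).toMonoidHom) (Additive.toMul m)) by
          rw [TensorProduct.smul_tmul', smul_eq_mul]]
      rw [map_sub, PhiTen_mul_of, sub_self]
    · intro r
      rw [smul_zero, map_zero]
    · intro a b _ _ ha hb r
      rw [smul_add, map_add, ha, hb, add_zero]
    · intro c a _ ha r
      rw [smul_smul]
      exact ha (r * c)
  have := main x hx 1
  rwa [one_smul] at this


noncomputable def PhiQ (i : ι) : IndM N i →ₗ[ℤ] EE N :=
  (Submodule.liftQ
      ((relSub (QQ N) (Gi i) (N i) ((QuotientGroup.mk' (KK N)).comp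
        (Monoid.CoprodI.of : Gi i →* Monoid.CoprodI Gi))).restrictScalars ℤ)
      (PhiTen N i)
      (fun x hx => PhiTen_vanish N i x hx)).comp
    (Submodule.Quotient.restrictScalarsEquiv ℤ
      (relSub (QQ N) (Gi i) (N i) ((QuotientGroup.mk' (KK N)).comp
        (Monoid.CoprodI.of : Gi i →* Monoid.CoprodI Gi)))).symm.toLinearMap

lemma PhiQ_mk (i : ι) (x : MonoidAlgebra ℤ (QQ N) ⊗[ℤ] Additive (Abelianization ↥(N i))) :
    PhiQ N i (Submodule.Quotient.mk x) = PhiTen N i x := by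
  unfold PhiQ
  rw [LinearMap.comp_apply]
  rw [show ((Submodule.Quotient.restrictScalarsEquiv ℤ
      (relSub (QQ N) (Gi i) (N i) ((QuotientGroup.mk' (KK N)).comp
        (Monoid.CoprodI.of : Gi i →* Monoid.CoprodI Gi)))).symm.toLinearMap
      (Submodule.Quotient.mk x) :
      (MonoidAlgebra ℤ (QQ N) ⊗[ℤ] Additive (Abelianization ↥(N i))) ⧸
        (relSub (QQ N) (Gi i) (N i) ((QuotientGroup.mk' (KK N)).comp
          (Monoid.CoprodI.of : Gi i →* Monoid.CoprodI Gi))).restrictScalars ℤ) =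
    Submodule.Quotient.mk x from
      Submodule.Quotient.restrictScalarsEquiv_symm_mk ℤ _ x]
  exact Submodule.liftQ_apply _ _ _

noncomputable def Phi : MM N →+ EE N :=
  DirectSum.toAddMonoid (fun i => (PhiQ N i).toAddMonoidHom)

lemma Phi_gen (i : ι) (q : QQ N) (n : Gi i) (hn : n ∈ N i)
    (hmem : Quotient.out q * CoprodI.of n * (Quotient.out q)⁻¹ ∈ KK N) :
    Phi N (DirectSum.of (fun i => IndM N i) i (gen N i q n hn)) =
      Additive.ofMul (Abelianization.of
        (⟨Quotient.out q * CoprodI.of n * (Quotient.out q)⁻¹, hmem⟩ : ↥(KK N))) := by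
  unfold Phi
  rw [DirectSum.toAddMonoid_of]
  show PhiQ N i (gen N i q n hn) = _
  unfold gen
  rw [PhiQ_mk, PhiTen_of_tmul]
  rw [show Additive.toMul (Additive.ofMul (Abelianization.of (⟨n, hn⟩ : ↥(N i)))) =
    Abelianization.of (⟨n, hn⟩ : ↥(N i)) from rfl]
  rw [fAb_of N i q n hn hmem]

/-! ### The forward map -/

noncomputable def Psi0 : ↥(KK N) →* Multiplicative (MM N) :=
  (AddMonoidHom.toMultiplicative (P N)).comp (DK N)

noncomputable def PsiAb : Abelianization ↥(KK N) →* Multiplicative (MM N) :=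
  Abelianization.lift (Psi0 N)

noncomputable def efwd : EE N →+ MM N :=
  MonoidHom.toAdditiveLeft (PsiAb N)

lemma efwd_of (k : ↥(KK N)) :
    efwd N (Additive.ofMul (Abelianization.of k)) = Multiplicative.toAdd (Psi0 N k) := by
  unfold efwd
  show Multiplicative.toAdd (PsiAb N (Abelianization.of k)) = _
  unfold PsiAb
  rw [Abelianization.lift_apply_of]

lemma efwd_conj (g : CoprodI Gi) {i : ι} {n : Gi i} (hn : n ∈ N i)
    (hmem : g * CoprodI.of n * g⁻¹ ∈ KK N) :
    efwd N (Additive.ofMul (Abelianization.of (⟨g * CoprodI.of n * g⁻¹, hmem⟩ : ↥(KK N)))) =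
      DirectSum.of (fun i => IndM N i) i (gen N i (pr N g) n hn) := by
  rw [efwd_of]
  unfold Psi0
  rw [MonoidHom.comp_apply, DK_conj N g hn hmem]
  show P N (mkT N (FreeAbelianGroup.of (pr N g, ⟨i, n⟩))) = _
  exact P_gen N i (pr N g) n hn


/-! ### The identities -/

lemma MM_hom_ext {A : Type*} [AddCommMonoid A] (F G : MM N →+ A)
    (h : ∀ (i : ι) (q : QQ N) (n : Gi i) (hn : n ∈ N i),
      F (DirectSum.of (fun i => IndM N i) i (gen N i q n hn)) =
        G (DirectSum.of (fun i => IndM N i) i (gen N i q n hn))) : F = G := by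
  refine DirectSum.addHom_ext (fun i x => ?_)
  obtain ⟨t, rfl⟩ := Submodule.Quotient.mk_surjective _ x
  induction t using TensorProduct.induction_on with
  | zero =>
    rw [Submodule.Quotient.mk_zero, map_zero, map_zero, map_zero]
  | add x y hx hy =>
    rw [Submodule.Quotient.mk_add, map_add, map_add, map_add, hx, hy]
  | tmul a m =>
    induction a using MonoidAlgebra.induction_linear with
    | zero =>
      rw [show ((0 : MonoidAlgebra ℤ (QQ N)) ⊗ₜ[ℤ] m) = 0 from TensorProduct.zero_tmul _ m,
        Submodule.Quotient.mk_zero, map_zero, map_zero, map_zero]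
    | add f g hf hg =>
      rw [TensorProduct.add_tmul, Submodule.Quotient.mk_add, map_add, map_add, map_add,
        hf, hg]
    | single q c =>
      rw [show (MonoidAlgebra.single q c : MonoidAlgebra ℤ (QQ N)) =
          c • MonoidAlgebra.single q (1 : ℤ) by
            rw [MonoidAlgebra.smul_single, smul_eq_mul, mul_one],
        TensorProduct.smul_tmul]
      obtain ⟨z, hz⟩ : ∃ z : ↥(N i), Abelianization.of z = Additive.toMul (c • m) :=
        QuotientGroup.induction_on (Additive.toMul (c • m)) (fun z => ⟨z, rfl⟩)
      obtain ⟨n, hn⟩ := z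
      have hm : c • m = Additive.ofMul (Abelianization.of (⟨n, hn⟩ : ↥(N i))) := by
        rw [hz]; rfl
      rw [hm]
      have hsingle_of : (MonoidAlgebra.single q (1 : ℤ) : MonoidAlgebra ℤ (QQ N)) =
          MonoidAlgebra.of ℤ (QQ N) q := rfl
      rw [hsingle_of]
      exact h i q n hn

lemma smul_of_gen (r : MonoidAlgebra ℤ (QQ N)) (i : ι) (v : IndM N i) :
    r • DirectSum.of (fun i => IndM N i) i v =
      DirectSum.of (fun i => IndM N i) i (r • v) := by
  rw [← DirectSum.lof_eq_of (MonoidAlgebra ℤ (QQ N)), ← LinearMap.map_smul,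
    DirectSum.lof_eq_of]

lemma smul_gen (q0 : QQ N) (i : ι) (q : QQ N) (n : Gi i) (hn : n ∈ N i) :
    MonoidAlgebra.of ℤ (QQ N) q0 • gen N i q n hn = gen N i (q0 * q) n hn := by
  unfold gen
  rw [← Submodule.Quotient.mk_smul, TensorProduct.smul_tmul', smul_eq_mul, ← map_mul]

lemma efwd_Phi (y : MM N) : efwd N (Phi N y) = y := by
  have h : (efwd N).comp (Phi N) = AddMonoidHom.id (MM N) := by
    apply MM_hom_ext
    intro i q n hn
    have hmem : Quotient.out q * CoprodI.of n * (Quotient.out q)⁻¹ ∈ KK N :=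
      conj_mem_KK N _ (of_mem_KK N hn)
    show efwd N (Phi N (DirectSum.of (fun i => IndM N i) i (gen N i q n hn))) = _
    rw [Phi_gen N i q n hn hmem, efwd_conj N (Quotient.out q) hn hmem, pr_out]
    rfl
  exact DFunLike.congr_fun h y

lemma Phi_efwd_of : ∀ (x : CoprodI Gi) (hx : x ∈ KK N),
    Phi N (efwd N (Additive.ofMul (Abelianization.of (⟨x, hx⟩ : ↥(KK N))))) =
      Additive.ofMul (Abelianization.of (⟨x, hx⟩ : ↥(KK N))) := by
  intro x hx
  refine Subgroup.closure_induction
    (p := fun x hx => Phi N (efwd N (Additive.ofMul (Abelianization.of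
      (⟨x, hx⟩ : ↥(KK N))))) = Additive.ofMul (Abelianization.of (⟨x, hx⟩ : ↥(KK N))))
    ?_ ?_ ?_ ?_ hx
  · intro y hy
    rw [Group.mem_conjugatesOfSet_iff] at hy
    obtain ⟨a, haS, hconj⟩ := hy
    rw [Set.mem_iUnion] at haS
    obtain ⟨i, ha⟩ := haS
    obtain ⟨n, hn, rfl⟩ := ha
    rw [isConj_iff] at hconj
    obtain ⟨c, hc⟩ := hconj
    subst hc
    have hy2 : c * CoprodI.of n * c⁻¹ ∈ KK N := conj_mem_KK N c (of_mem_KK N hn)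
    show Phi N (efwd N (Additive.ofMul (Abelianization.of
        (⟨c * CoprodI.of n * c⁻¹, hy2⟩ : ↥(KK N))))) =
      Additive.ofMul (Abelianization.of (⟨c * CoprodI.of n * c⁻¹, hy2⟩ : ↥(KK N)))
    rw [efwd_conj N c hn hy2]
    have hmem : Quotient.out (pr N c) * CoprodI.of n * (Quotient.out (pr N c))⁻¹ ∈ KK N :=
      conj_mem_KK N _ (of_mem_KK N hn)
    rw [Phi_gen N i (pr N c) n hn hmem]
    exact congrArg Additive.ofMul (conj_eq N _ c (pr_out N _) _ hmem hy2)
  · show Phi N (efwd N (Additive.ofMul (Abelianization.of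
        (⟨(1 : CoprodI Gi), (KK N).one_mem⟩ : ↥(KK N))))) = _
    rw [show (⟨(1 : CoprodI Gi), (KK N).one_mem⟩ : ↥(KK N)) = 1 from rfl, map_one,
      ofMul_one, map_zero, map_zero]
  · intro x y hx hy ihx ihy
    have hxm : x ∈ KK N := hx
    have hym : y ∈ KK N := hy
    show Phi N (efwd N (Additive.ofMul (Abelianization.of
        (⟨x * y, mul_mem hxm hym⟩ : ↥(KK N))))) = _
    rw [show (⟨x * y, mul_mem hxm hym⟩ : ↥(KK N)) = ⟨x, hxm⟩ * ⟨y, hym⟩ from rfl,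
      map_mul, ofMul_mul, map_add, map_add]
    have ihx' : Phi N (efwd N (Additive.ofMul (Abelianization.of
        (⟨x, hxm⟩ : ↥(KK N))))) = Additive.ofMul (Abelianization.of (⟨x, hxm⟩ : ↥(KK N))) :=
      ihx
    have ihy' : Phi N (efwd N (Additive.ofMul (Abelianization.of
        (⟨y, hym⟩ : ↥(KK N))))) = Additive.ofMul (Abelianization.of (⟨y, hym⟩ : ↥(KK N))) :=
      ihy
    rw [ihx', ihy']
  · intro x hx ih
    have hxm : x ∈ KK N := hx
    show Phi N (efwd N (Additive.ofMul (Abelianization.of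
        (⟨x⁻¹, inv_mem hxm⟩ : ↥(KK N))))) = _
    rw [show (⟨x⁻¹, inv_mem hxm⟩ : ↥(KK N)) = (⟨x, hxm⟩ : ↥(KK N))⁻¹ from rfl,
      map_inv, ofMul_inv, map_neg, map_neg]
    have ih' : Phi N (efwd N (Additive.ofMul (Abelianization.of
        (⟨x, hxm⟩ : ↥(KK N))))) = Additive.ofMul (Abelianization.of (⟨x, hxm⟩ : ↥(KK N))) :=
      ih
    rw [ih']

lemma Phi_efwd (e : EE N) : Phi N (efwd N e) = e := by
  obtain ⟨z, hz⟩ : ∃ z : ↥(KK N), Abelianization.of z = Additive.toMul e :=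
    QuotientGroup.induction_on (Additive.toMul e) (fun z => ⟨z, rfl⟩)
  obtain ⟨x, hx⟩ := z
  have he : e = Additive.ofMul (Abelianization.of (⟨x, hx⟩ : ↥(KK N))) := by rw [hz]; rfl
  rw [he]
  exact Phi_efwd_of N x hx

lemma Phi_conj (g : CoprodI Gi) (y : MM N) :
    Additive.ofMul ((Abelianization.map (MulAut.conjNormal g).toMonoidHom)
        (Additive.toMul (Phi N y))) =
      Phi N (MonoidAlgebra.of ℤ (QQ N) (pr N g) • y) := by
  have h : (MonoidHom.toAdditive
        (Abelianization.map (MulAut.conjNormal (H := KK N) g).toMonoidHom)).comp (Phi N) =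
      (Phi N).comp (DistribMulAction.toAddMonoidHom (MM N)
        (MonoidAlgebra.of ℤ (QQ N) (pr N g))) := by
    apply MM_hom_ext
    intro i q n hn
    show Additive.ofMul ((Abelianization.map (MulAut.conjNormal g).toMonoidHom)
        (Additive.toMul (Phi N (DirectSum.of (fun i => IndM N i) i (gen N i q n hn))))) =
      Phi N (MonoidAlgebra.of ℤ (QQ N) (pr N g) •
        DirectSum.of (fun i => IndM N i) i (gen N i q n hn))
    have hmem : Quotient.out q * CoprodI.of n * (Quotient.out q)⁻¹ ∈ KK N :=
      conj_mem_KK N _ (of_mem_KK N hn)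
    rw [Phi_gen N i q n hn hmem, smul_of_gen, smul_gen]
    have hmem2 : Quotient.out (pr N g * q) * CoprodI.of n *
        (Quotient.out (pr N g * q))⁻¹ ∈ KK N := conj_mem_KK N _ (of_mem_KK N hn)
    rw [Phi_gen N i (pr N g * q) n hn hmem2]
    have hmem3 : (g * Quotient.out q) * CoprodI.of n * (g * Quotient.out q)⁻¹ ∈ KK N :=
      conj_mem_KK N _ (of_mem_KK N hn)
    have step1 : (Abelianization.map (MulAut.conjNormal (H := KK N) g).toMonoidHom)
        (Abelianization.of (⟨Quotient.out q * CoprodI.of n * (Quotient.out q)⁻¹, hmem⟩ :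
          ↥(KK N))) =
        Abelianization.of (⟨(g * Quotient.out q) * CoprodI.of n * (g * Quotient.out q)⁻¹,
          hmem3⟩ : ↥(KK N)) := by
      rw [Abelianization.map_of]
      congr 1
      apply Subtype.ext
      show g * (Quotient.out q * CoprodI.of n * (Quotient.out q)⁻¹) * g⁻¹ = _
      group
    rw [show Additive.toMul (Additive.ofMul (Abelianization.of
        (⟨Quotient.out q * CoprodI.of n * (Quotient.out q)⁻¹, hmem⟩ : ↥(KK N)))) =
      Abelianization.of (⟨Quotient.out q * CoprodI.of n * (Quotient.out q)⁻¹, hmem⟩ :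
        ↥(KK N)) from rfl, step1]
    apply congrArg Additive.ofMul
    apply conj_eq
    rw [map_mul, pr_out, pr_out]
  exact DFunLike.congr_fun h y

noncomputable def eqv : EE N ≃+ MM N :=
  AddMonoidHom.toAddEquiv (efwd N) (Phi N)
    (AddMonoidHom.ext (fun e => Phi_efwd N e))
    (AddMonoidHom.ext (fun y => efwd_Phi N y))

lemma eqv_apply (e : EE N) : eqv N e = efwd N e := rfl

lemma eqv_equivariant (g : CoprodI Gi) (x : EE N) :
    eqv N (Additive.ofMul ((Abelianization.map (MulAut.conjNormal g).toMonoidHom)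
        (Additive.toMul x))) =
      MonoidAlgebra.of ℤ (QQ N) (QuotientGroup.mk g) • eqv N x := by
  conv_lhs => rw [show x = Phi N (efwd N x) from (Phi_efwd N x).symm]
  rw [eqv_apply, Phi_conj N g (efwd N x), efwd_Phi]
  rfl

end CoprodIRelAux

/-- **The relative relation module of a Dehn filling of a free product.**
Let `{Gi i}` be a family of groups and let `G = ∗ i, Gi i` be their free product, each
`Gi i` being regarded as a subgroup of `G` via the canonical embedding. Let `N i` be a
normal subgroup of `Gi i` for each `i`, let `⟪N⟫` be the normal closure in `G` of the
union of (the images of) the `N i`, `Q = G/⟪N⟫` and `Q i = Gi i / N i`. Then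
`Rel(G, ⟪N⟫) ≅ ⨁ i, ℤQ ⊗_{ℤQ i} Rel(Gi i, N i)` as `ℤQ`-modules. -/
theorem coprodI_relModule {ι : Type*} {Gi : ι → Type*} [∀ i, Group (Gi i)]
    (N : ∀ i, Subgroup (Gi i)) [∀ i, (N i).Normal] :
    RelModuleIsoIndFam (Monoid.CoprodI Gi)
      (fun i => (Monoid.CoprodI.of : Gi i →* Monoid.CoprodI Gi)) N
      (Subgroup.normalClosure
        (⋃ i, (((N i).map (Monoid.CoprodI.of : Gi i →* Monoid.CoprodI Gi)) :
          Set (Monoid.CoprodI Gi)))) := by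
  classical
  exact ⟨CoprodIRelAux.eqv N, fun g x => CoprodIRelAux.eqv_equivariant N g x⟩
end
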